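/- If each X_i is a finite set with at least two points, then d⁰(V) is a σ-ideal: it is closed under subsets and countable unions. -/

import Mathlib

open Set Cardinal

/-- The set of branches of the trimmed tree `T[A,α]`:
all `β` agreeing with `α` outside of `A`. -/
def branches (X : ℕ → Type) (A : Set ℕ) (α : ∀ i, X i) : Set (∀ i, X i) :=
  {β | ∀ n ∉ A, β n = α n}

/-- The family `V` of branch sets of trimmed trees. -/
def treeV (X : ℕ → Type) : Set (Set (∀ i, X i)) :=
  {S | ∃ A α, A.Infinite ∧ S = branches X A α}

/-- `[T]*`: all `β` agreeing with `α` outside of `A`, up to finitely many exceptions. -/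
def starBranches (X : ℕ → Type) (A : Set ℕ) (α : ∀ i, X i) : Set (∀ i, X i) :=
  {β | {n | n ∉ A ∧ β n ≠ α n}.Finite}

/-- The family `V*`. -/
def treeVstar (X : ℕ → Type) : Set (Set (∀ i, X i)) :=
  {S | ∃ A α, A.Infinite ∧ S = starBranches X A α}

/-- The ideal `d⁰(F)`. -/
def d0 {X : ℕ → Type} (F : Set (Set (∀ i, X i))) : Set (Set (∀ i, X i)) :=
  {Y | ∀ W ∈ F, ∃ U ∈ F, U ⊆ W ∧ U ∩ Y = ∅}

/-- `α_s`: overwrite `α` by `s` on `{0,…,n-1}`. -/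
def modifySeq (X : ℕ → Type) (n : ℕ) (s α : ∀ i, X i) : ∀ i, X i :=
  fun i => if i < n then s i else α i

/-- `add(d⁰(V))`: the least cardinality of a subfamily of `d⁰(V)` whose union
is not in `d⁰(V)`. -/
noncomputable def addd0 (X : ℕ → Type) : Cardinal :=
  sInf {c | ∃ G : Set (Set (∀ i, X i)), G ⊆ d0 (treeV X) ∧ ⋃₀ G ∉ d0 (treeV X) ∧ c = #G}

section Aux
variable (X : ℕ → Type)

lemma branches_mono {A B : Set ℕ} {α β : ∀ i, X i} (hBA : B ⊆ A)
    (hagree : ∀ i ∉ A, β i = α i) : branches X B β ⊆ branches X A α := by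
  intro γ hγ i hi
  rw [hγ i (fun h => hi (hBA h)), hagree i hi]

lemma self_mem_branches (A : Set ℕ) (α : ∀ i, X i) : α ∈ branches X A α :=
  fun _ _ => rfl

lemma subset_of_branches_subset [∀ i, Nontrivial (X i)] {A B : Set ℕ} {α β : ∀ i, X i}
    (h : branches X B β ⊆ branches X A α) : B ⊆ A := by
  intro i hi
  by_contra hiA
  obtain ⟨c, hc⟩ := exists_ne (α i)
  have hmem : Function.update β i c ∈ branches X B β := by
    intro n hn
    rw [Function.update_of_ne (by rintro rfl; exact hn hi)]
  have := h hmem i hiA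
  rw [Function.update_self] at this
  exact hc this

lemma patterns_exist [∀ i, Finite (X i)] [∀ i, Nontrivial (X i)] (F : Finset ℕ) :
    ∃ L : List (∀ i, X i), ∀ β : ∀ i, X i, ∃ s ∈ L, ∀ i ∈ F, s i = β i := by
  classical
  haveI : ∀ i, Fintype (X i) := fun i => Fintype.ofFinite _
  let ext : (∀ i : F, X i) → (∀ i, X i) := fun t i =>
    if h : i ∈ F then t ⟨i, h⟩ else Classical.arbitrary _
  refine ⟨(Finset.univ : Finset (∀ i : F, X i)).toList.map ext, ?_⟩
  intro β
  refine ⟨ext (fun i => β i), List.mem_map_of_mem (Finset.mem_toList.2 (Finset.mem_univ _)), ?_⟩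
  intro i hi
  simp [ext, dif_pos hi]

lemma iterLemma [∀ i, Finite (X i)] [∀ i, Nontrivial (X i)]
    (Y : Set (∀ i, X i)) (hY : Y ∈ d0 (treeV X)) (F : Finset ℕ)
    (A : Set ℕ) (α : ∀ i, X i) (hA : A.Infinite) (hdisj : ∀ i ∈ F, i ∉ A)
    (L : List (∀ i, X i)) :
    ∃ (A' : Set ℕ) (α' : ∀ i, X i), A'.Infinite ∧ A' ⊆ A ∧
      (∀ i, i ∉ A → i ∉ F → α' i = α i) ∧
      ∀ s ∈ L, branches X A' (fun i => if i ∈ F then s i else α' i) ∩ Y = ∅ := by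
  classical
  induction L with
  | nil => exact ⟨A, α, hA, subset_rfl, fun _ _ _ => rfl, by simp⟩
  | cons s L ih =>
    obtain ⟨A', α', hA', hsub, hagree, hL⟩ := ih
    obtain ⟨U, hU, hUW, hUY⟩ :=
      hY (branches X A' (fun i => if i ∈ F then s i else α' i))
        ⟨A', fun i => if i ∈ F then s i else α' i, hA', rfl⟩
    obtain ⟨B, γ, hB, rfl⟩ := hU
    have hBA' : B ⊆ A' := subset_of_branches_subset X hUW
    have hγ : ∀ i ∉ A', γ i = if i ∈ F then s i else α' i :=
      hUW (self_mem_branches X B γ)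
    refine ⟨B, γ, hB, hBA'.trans hsub, ?_, ?_⟩
    · intro i hiA hiF
      have hiA' : i ∉ A' := fun h => hiA (hsub h)
      rw [hγ i hiA', if_neg hiF, hagree i hiA hiF]
    · rintro s' hs'
      rcases List.mem_cons.1 hs' with rfl | hs'
      · have hsubB : branches X B (fun i => if i ∈ F then s' i else γ i) ⊆ branches X B γ := by
          apply branches_mono X subset_rfl
          intro i hi
          by_cases hiF : i ∈ F
          · have hiA' : i ∉ A' := fun h => hdisj i hiF (hsub h)
            rw [if_pos hiF, hγ i hiA', if_pos hiF]
          · rw [if_neg hiF]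
        rw [Set.eq_empty_iff_forall_notMem]
        intro x hx
        exact Set.eq_empty_iff_forall_notMem.1 hUY x ⟨hsubB hx.1, hx.2⟩
      · have hsubB : branches X B (fun i => if i ∈ F then s' i else γ i) ⊆
            branches X A' (fun i => if i ∈ F then s' i else α' i) := by
          apply branches_mono X hBA'
          intro i hi
          by_cases hiF : i ∈ F
          · rw [if_pos hiF, if_pos hiF]
          · rw [if_neg hiF, if_neg hiF, hγ i hi, if_neg hiF]
        rw [Set.eq_empty_iff_forall_notMem]
        intro x hx
        exact Set.eq_empty_iff_forall_notMem.1 (hL s' hs') x ⟨hsubB hx.1, hx.2⟩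

lemma stepLemma [∀ i, Finite (X i)] [∀ i, Nontrivial (X i)]
    (Y : Set (∀ i, X i)) (hY : Y ∈ d0 (treeV X)) (A : Set ℕ) (α : ∀ i, X i)
    (F : Finset ℕ) (hA : A.Infinite) (hF : ↑F ⊆ A) :
    ∃ (A' : Set ℕ) (α' : ∀ i, X i), A'.Infinite ∧ A' ⊆ A ∧ ↑F ⊆ A' ∧
      (∀ i ∉ A, α' i = α i) ∧ branches X A' α' ∩ Y = ∅ := by
  classical
  obtain ⟨L, hL⟩ := patterns_exist X F
  have hA1 : (A \ ↑F).Infinite := hA.diff F.finite_toSet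
  obtain ⟨A'', α'', hA'', hsub, hagree, hpat⟩ :=
    iterLemma X Y hY F (A \ ↑F) α hA1 (fun i hi h => h.2 hi) L
  refine ⟨A'' ∪ ↑F, α'', hA''.mono Set.subset_union_left,
    Set.union_subset (hsub.trans Set.diff_subset) hF, Set.subset_union_right, ?_, ?_⟩
  · intro i hi
    have hiF : i ∉ F := fun h => hi (hF h)
    exact hagree i (fun h => hi h.1) hiF
  · rw [Set.eq_empty_iff_forall_notMem]
    intro b hb
    obtain ⟨s, hsL, hs⟩ := hL b
    have hbmem : b ∈ branches X A'' (fun i => if i ∈ F then s i else α'' i) := by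
      intro i hi
      show b i = if i ∈ F then s i else α'' i
      by_cases hiF : i ∈ F
      · rw [if_pos hiF, hs i hiF]
      · have : i ∉ A'' ∪ ↑F := by
          rintro (h | h)
          exacts [hi h, hiF h]
        rw [if_neg hiF]
        exact hb.1 i this
    exact Set.eq_empty_iff_forall_notMem.1 (hpat s hsL) b ⟨hbmem, hb.2⟩

end Aux

theorem stmt9 (X : ℕ → Type) [∀ i, Finite (X i)] [∀ i, Nontrivial (X i)] :
    (∀ Y ∈ d0 (treeV X), ∀ Z ⊆ Y, Z ∈ d0 (treeV X)) ∧
      ∀ f : ℕ → Set (∀ i, X i), (∀ n, f n ∈ d0 (treeV X)) →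
        (⋃ n, f n) ∈ d0 (treeV X) := by
  classical
  constructor
  · intro Y hY Z hZ W hW
    obtain ⟨U, hU, hUW, hUY⟩ := hY W hW
    refine ⟨U, hU, hUW, ?_⟩
    rw [Set.eq_empty_iff_forall_notMem]
    intro x hx
    exact Set.eq_empty_iff_forall_notMem.1 hUY x ⟨hx.1, hZ hx.2⟩
  · intro f hf W hW
    obtain ⟨A0, α0, hA0, rfl⟩ := hW
    have hstep : ∀ (n : ℕ)
        (p : {p : Set ℕ × (∀ i, X i) × Finset ℕ // p.1.Infinite ∧ ↑p.2.2 ⊆ p.1}),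
        ∃ q : {p : Set ℕ × (∀ i, X i) × Finset ℕ // p.1.Infinite ∧ ↑p.2.2 ⊆ p.1},
          q.1.1 ⊆ p.1.1 ∧ p.1.2.2 ⊆ q.1.2.2 ∧ q.1.2.2.card = p.1.2.2.card + 1 ∧
          (∀ i ∉ p.1.1, q.1.2.1 i = p.1.2.1 i) ∧ branches X q.1.1 q.1.2.1 ∩ f n = ∅ := by
      rintro n ⟨⟨A, α, F⟩, hA, hFA⟩
      obtain ⟨b, hbA, hbF⟩ := (hA.diff F.finite_toSet).nonempty
      have hbF' : b ∉ F := fun h => hbF (Finset.mem_coe.2 h)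
      have hF' : ↑(insert b F) ⊆ A := by
        rw [Finset.coe_insert]
        exact Set.insert_subset hbA hFA
      obtain ⟨A', α', hA', hsub, hFsub, hagree, hdisj⟩ :=
        stepLemma X (f n) (hf n) A α (insert b F) hA hF'
      exact ⟨⟨⟨A', α', insert b F⟩, hA', hFsub⟩, hsub, Finset.subset_insert _ _,
        Finset.card_insert_of_notMem hbF', hagree, hdisj⟩
    choose nxt hnxt using hstep
    let g : ℕ → {p : Set ℕ × (∀ i, X i) × Finset ℕ // p.1.Infinite ∧ ↑p.2.2 ⊆ p.1} :=
      fun n => Nat.rec ⟨⟨A0, α0, ∅⟩, hA0, by simp⟩ nxt n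
    set As : ℕ → Set ℕ := fun n => (g n).1.1 with hAs
    set als : ℕ → ∀ i, X i := fun n => (g n).1.2.1 with hals
    set Fs : ℕ → Finset ℕ := fun n => (g n).1.2.2 with hFs
    have hg : ∀ n, g (n + 1) = nxt n (g n) := fun n => rfl
    have hsub1 : ∀ n, As (n + 1) ⊆ As n := fun n => (hnxt n (g n)).1
    have hF1 : ∀ n, Fs n ⊆ Fs (n + 1) := fun n => (hnxt n (g n)).2.1
    have hcard1 : ∀ n, (Fs (n + 1)).card = (Fs n).card + 1 := fun n => (hnxt n (g n)).2.2.1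
    have hal1 : ∀ n, ∀ i ∉ As n, als (n + 1) i = als n i := fun n => (hnxt n (g n)).2.2.2.1
    have hdisjf : ∀ n, branches X (As (n + 1)) (als (n + 1)) ∩ f n = ∅ :=
      fun n => (hnxt n (g n)).2.2.2.2
    have hAinf : ∀ n, (As n).Infinite := fun n => (g n).2.1
    have hFA : ∀ n, ↑(Fs n) ⊆ As n := fun n => (g n).2.2
    have hAmono : ∀ {n m : ℕ}, n ≤ m → As m ⊆ As n := by
      intro n m h
      induction h with
      | refl => exact subset_rfl
      | step _ ih => exact (hsub1 _).trans ih
    have hFmono : ∀ {n m : ℕ}, n ≤ m → Fs n ⊆ Fs m := by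
      intro n m h
      induction h with
      | refl => exact Finset.Subset.refl _
      | step _ ih => exact ih.trans (hF1 _)
    have hcard : ∀ n, (Fs n).card = n := by
      intro n
      induction n with
      | zero => rfl
      | succ n ih => rw [hcard1 n, ih]
    have halag : ∀ n m, n ≤ m → ∀ i ∉ As n, als m i = als n i := by
      intro n m h
      induction h with
      | refl => exact fun _ _ => rfl
      | @step m h ih =>
        intro i hi
        rw [hal1 m i (fun hm => hi (hAmono h hm)), ih i hi]
    set B : Set ℕ := ⋃ n, ↑(Fs n) with hBdef
    have hBsub : ∀ n, B ⊆ As n := by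
      intro n i hi
      rw [hBdef, Set.mem_iUnion] at hi
      obtain ⟨m, hm⟩ := hi
      rcases le_total m n with h | h
      · exact hFA n (hFmono h hm)
      · exact hAmono h (hFA m hm)
    have hBinf : B.Infinite := by
      by_contra h
      rw [Set.not_infinite] at h
      have hle : ∀ n, n ≤ h.toFinset.card := by
        intro n
        rw [← hcard n]
        exact Finset.card_le_card (fun i hi =>
          h.mem_toFinset.2 (Set.mem_iUnion.2 ⟨n, hi⟩))
      exact absurd (hle (h.toFinset.card + 1)) (by omega)
    set β : ∀ i, X i := fun i =>
      if h : ∃ n, i ∉ As n then als (Nat.find h) i else als 0 i with hβdef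
    have hβ : ∀ n, ∀ i ∉ As n, β i = als n i := by
      intro n i hi
      have hex : ∃ m, i ∉ As m := ⟨n, hi⟩
      have : β i = als (Nat.find hex) i := by rw [hβdef]; exact dif_pos hex
      rw [this]
      exact (halag _ n (Nat.find_le hi) i (Nat.find_spec hex)).symm
    refine ⟨branches X B β, ⟨B, β, hBinf, rfl⟩, ?_, ?_⟩
    · exact branches_mono X (hBsub 0) (fun i hi => hβ 0 i hi)
    · rw [Set.eq_empty_iff_forall_notMem]
      rintro x ⟨hx1, hx2⟩
      rw [Set.mem_iUnion] at hx2
      obtain ⟨n, hxn⟩ := hx2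
      have hx3 : x ∈ branches X (As (n + 1)) (als (n + 1)) :=
        branches_mono X (hBsub (n + 1)) (hβ (n + 1)) hx1
      exact Set.eq_empty_iff_forall_notMem.1 (hdisjf n) x ⟨hx3, hxn⟩
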